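/- Let Φ and φ denote the cumulative distribution function and the density of the standard normal distribution. Let μ ∈ ℝ, q ∈ [0,1], and σ² > 1/4; set σ_∖² = σ² − q(1−q) and μ_∖ = μ − q. For any real l, put I = (l + 1/2 − μ)/σ and I_∖ = (l + 1/2 − μ_∖)/σ_∖. Then |Φ(I) − Φ(I_∖)| ≤ (1/(4√(2π))) · 1/(√e (σ² − 1/4)) + (1/√(2π)) · 1/√(σ² − 1/4). -/

import Mathlib

open Real MeasureTheory

noncomputable def stdNormalCDF (u : ℝ) : ℝ :=
  ∫ t in Set.Iio u, (1 / Real.sqrt (2 * Real.pi)) * Real.exp (-t ^ 2 / 2)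

lemma phi_integrable : Integrable (fun t : ℝ => (1 / Real.sqrt (2 * Real.pi)) * Real.exp (-t ^ 2 / 2)) := by
  have h := (integrable_exp_neg_mul_sq (by norm_num : (0:ℝ) < 1/2)).const_mul (1 / Real.sqrt (2 * Real.pi))
  convert h using 2 with t
  ring_nf

lemma cdf_sub_eq {a b : ℝ} (hab : a ≤ b) :
    stdNormalCDF b - stdNormalCDF a
      = ∫ t in Set.Ico a b, (1 / Real.sqrt (2 * Real.pi)) * Real.exp (-t ^ 2 / 2) := by
  have h : stdNormalCDF b = stdNormalCDF a
      + ∫ t in Set.Ico a b, (1 / Real.sqrt (2 * Real.pi)) * Real.exp (-t ^ 2 / 2) := by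
    rw [stdNormalCDF, stdNormalCDF, ← Set.Iio_union_Ico_eq_Iio hab,
      MeasureTheory.setIntegral_union (by simp only [Set.disjoint_left, Set.mem_Iio, Set.mem_Ico]; intro t h1 h2; exact absurd h2.1 (not_le.2 h1)) measurableSet_Ico
        phi_integrable.integrableOn phi_integrable.integrableOn]
  linarith

lemma cdf_diff_bounds {a b M : ℝ} (hab : a ≤ b)
    (hM : ∀ t ∈ Set.Ico a b, (1 / Real.sqrt (2 * Real.pi)) * Real.exp (-t ^ 2 / 2) ≤ M) :
    0 ≤ stdNormalCDF b - stdNormalCDF a ∧ stdNormalCDF b - stdNormalCDF a ≤ M * (b - a) := by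
  rw [cdf_sub_eq hab]
  constructor
  · apply MeasureTheory.setIntegral_nonneg measurableSet_Ico
    intro t _
    positivity
  · calc ∫ t in Set.Ico a b, (1 / Real.sqrt (2 * Real.pi)) * Real.exp (-t ^ 2 / 2)
        ≤ ∫ _t in Set.Ico a b, M := by
          apply MeasureTheory.setIntegral_mono_on phi_integrable.integrableOn
            (integrableOn_const (by simp)) measurableSet_Ico hM
      _ = M * (b - a) := by
          rw [MeasureTheory.setIntegral_const, Real.volume_real_Ico_of_le hab, smul_eq_mul,
            mul_comm]

lemma abs_cdf_diff_le {a b M : ℝ}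
    (hM : ∀ t ∈ Set.Ico (min a b) (max a b), (1 / Real.sqrt (2 * Real.pi)) * Real.exp (-t ^ 2 / 2) ≤ M) :
    |stdNormalCDF a - stdNormalCDF b| ≤ M * |a - b| := by
  obtain ⟨h0, h1⟩ := cdf_diff_bounds (min_le_max (a := a) (b := b)) hM
  rcases le_total a b with h | h
  · rw [min_eq_left h, max_eq_right h] at h0 h1
    rw [abs_sub_comm, abs_of_nonneg h0, abs_sub_comm, abs_of_nonneg (by linarith)]
    exact h1
  · rw [min_eq_right h, max_eq_left h] at h0 h1
    rw [abs_of_nonneg h0, abs_of_nonneg (by linarith)]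
    exact h1

lemma mul_exp_le_exp_neg_half {u : ℝ} (hu : 0 ≤ u) :
    u * Real.exp (-u ^ 2 / 2) ≤ Real.exp (-(1 / 2)) := by
  have h1 : u ≤ Real.exp ((u ^ 2 - 1) / 2) := by
    have h2 := Real.add_one_le_exp ((u ^ 2 - 1) / 2)
    nlinarith [sq_nonneg (u - 1)]
  calc u * Real.exp (-u ^ 2 / 2)
      ≤ Real.exp ((u ^ 2 - 1) / 2) * Real.exp (-u ^ 2 / 2) :=
        mul_le_mul_of_nonneg_right h1 (Real.exp_pos _).le
    _ = Real.exp (-(1 / 2)) := by rw [← Real.exp_add]; ring_nf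

set_option maxHeartbeats 1000000 in
/-- **Gaussian CDF perturbation bound for the blind approximation.** For `μ ∈ ℝ`,
`q ∈ [0,1]`, `σ² > 1/4`, with `σ∖² = σ² - q(1-q)`, `μ∖ = μ - q`,
`I = (l + 1/2 - μ)/σ` and `I∖ = (l + 1/2 - μ∖)/σ∖`, we have
`|Φ(I) - Φ(I∖)| ≤ (1/(4√(2π))) · 1/(√e (σ²-1/4)) + (1/√(2π)) · 1/√(σ²-1/4)`. -/
theorem gaussian_cdf_perturbation (μ : ℝ) (q : ℝ) (hq : q ∈ Set.Icc (0 : ℝ) 1)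
    (σsq : ℝ) (hσ : 1 / 4 < σsq) (l : ℝ) :
    |stdNormalCDF ((l + 1 / 2 - μ) / Real.sqrt σsq) -
        stdNormalCDF ((l + 1 / 2 - (μ - q)) / Real.sqrt (σsq - q * (1 - q)))| ≤
      (1 / (4 * Real.sqrt (2 * Real.pi))) * (1 / (Real.sqrt (Real.exp 1) * (σsq - 1 / 4)))
        + (1 / Real.sqrt (2 * Real.pi)) * (1 / Real.sqrt (σsq - 1 / 4)) := by
  obtain ⟨hq0, hq1⟩ := hq
  set c : ℝ := 1 / Real.sqrt (2 * Real.pi) with hc_def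
  have hc : 0 < c := by
    have := Real.sqrt_pos.2 (by positivity : (0:ℝ) < 2 * Real.pi)
    positivity
  set x : ℝ := l + 1 / 2 - μ with hx_def
  have hq01 : 0 ≤ q * (1 - q) := by nlinarith
  have hq14 : q * (1 - q) ≤ 1 / 4 := by nlinarith [sq_nonneg (q - 1/2)]
  have hD : (0:ℝ) < σsq - 1 / 4 := by linarith
  have hV : (0:ℝ) < σsq - q * (1 - q) := by linarith
  set s : ℝ := Real.sqrt σsq with hs_def
  set sb : ℝ := Real.sqrt (σsq - q * (1 - q)) with hsb_def
  have hs : 0 < s := Real.sqrt_pos.2 (by linarith)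
  have hsb : 0 < sb := Real.sqrt_pos.2 hV
  have hs2 : s ^ 2 = σsq := Real.sq_sqrt (by linarith)
  have hsb2 : sb ^ 2 = σsq - q * (1 - q) := Real.sq_sqrt hV.le
  have hsbs : sb ≤ s := Real.sqrt_le_sqrt (by linarith)
  have hDs : Real.sqrt (σsq - 1 / 4) ≤ sb := Real.sqrt_le_sqrt (by linarith)
  have hDpos : 0 < Real.sqrt (σsq - 1 / 4) := Real.sqrt_pos.2 hD
  have hE : Real.sqrt (Real.exp 1) = Real.exp (1 / 2) := by
    rw [show Real.exp 1 = Real.exp (1/2) ^ 2 by rw [sq, ← Real.exp_add]; norm_num]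
    exact Real.sqrt_sq (Real.exp_pos _).le
  have hxq : l + 1 / 2 - (μ - q) = x + q := by ring
  rw [hxq]
  -- triangle inequality through the midpoint x / sb
  have htri : |stdNormalCDF (x / s) - stdNormalCDF ((x + q) / sb)|
      ≤ |stdNormalCDF (x / s) - stdNormalCDF (x / sb)|
        + |stdNormalCDF (x / sb) - stdNormalCDF ((x + q) / sb)| := abs_sub_le _ _ _
  -- Term 2: mean shift
  have hterm2 : |stdNormalCDF (x / sb) - stdNormalCDF ((x + q) / sb)|
      ≤ c * (1 / Real.sqrt (σsq - 1 / 4)) := by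
    have hb : |stdNormalCDF (x / sb) - stdNormalCDF ((x + q) / sb)|
        ≤ c * |x / sb - (x + q) / sb| := by
      apply abs_cdf_diff_le
      intro t _
      have h1 : Real.exp (-t ^ 2 / 2) ≤ 1 := by
        rw [show (1:ℝ) = Real.exp 0 by simp]
        apply Real.exp_le_exp.2
        nlinarith [sq_nonneg t]
      calc c * Real.exp (-t ^ 2 / 2) ≤ c * 1 := mul_le_mul_of_nonneg_left h1 hc.le
        _ = c := mul_one c
    refine hb.trans ?_
    have habs : |x / sb - (x + q) / sb| = q / sb := by
      rw [show x / sb - (x + q) / sb = -(q / sb) by field_simp; ring, abs_neg,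
        abs_of_nonneg (by positivity)]
    rw [habs]
    apply mul_le_mul_of_nonneg_left _ hc.le
    rw [div_le_div_iff₀ hsb hDpos]
    nlinarith [hDpos.le]
  -- Term 1: scale change
  have hterm1 : |stdNormalCDF (x / s) - stdNormalCDF (x / sb)|
      ≤ (1 / (4 * Real.sqrt (2 * Real.pi))) * (1 / (Real.sqrt (Real.exp 1) * (σsq - 1 / 4))) := by
    set a : ℝ := x / s with ha_def
    set b : ℝ := x / sb with hb_def
    have hkey : ∀ t ∈ Set.Ico (min a b) (max a b), a ^ 2 ≤ t ^ 2 := by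
      intro t ⟨ht1, ht2⟩
      rcases le_total 0 x with hx | hx
      · have hab : a ≤ b := by
          rw [ha_def, hb_def, div_le_div_iff₀ hs hsb]
          exact mul_le_mul_of_nonneg_left hsbs hx
        rw [min_eq_left hab] at ht1
        have ha0 : 0 ≤ a := div_nonneg hx hs.le
        exact pow_le_pow_left₀ ha0 ht1 2
      · have hab : b ≤ a := by
          rw [ha_def, hb_def, div_le_div_iff₀ hsb hs]
          exact mul_le_mul_of_nonpos_left hsbs hx
        rw [max_eq_left hab] at ht2
        have ha0 : a ≤ 0 := div_nonpos_of_nonpos_of_nonneg hx hs.le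
        have h := pow_le_pow_left₀ (neg_nonneg.2 ha0) (neg_le_neg ht2.le) 2
        simpa using h
    have hb1 : |stdNormalCDF a - stdNormalCDF b| ≤ (c * Real.exp (-a ^ 2 / 2)) * |a - b| := by
      apply abs_cdf_diff_le
      intro t ht
      have := hkey t ht
      have : Real.exp (-t ^ 2 / 2) ≤ Real.exp (-a ^ 2 / 2) := Real.exp_le_exp.2 (by linarith)
      calc c * Real.exp (-t ^ 2 / 2) ≤ c * Real.exp (-a ^ 2 / 2) :=
        mul_le_mul_of_nonneg_left this hc.le
        _ = c * Real.exp (-a ^ 2 / 2) := rfl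
    refine hb1.trans ?_
    have habs : |a - b| = (|x| / s) * ((s - sb) / sb) := by
      rw [ha_def, hb_def, show x / s - x / sb = -(x * (s - sb) / (s * sb)) by field_simp; ring,
        abs_neg, abs_div, abs_mul, abs_of_nonneg (sub_nonneg.2 hsbs),
        abs_of_pos (mul_pos hs hsb)]
      field_simp
    rw [habs]
    have ha2 : a ^ 2 = (|x| / s) ^ 2 := by
      rw [ha_def, div_pow, div_pow, sq_abs]
    have h1 : Real.exp (-a ^ 2 / 2) * (|x| / s) ≤ 1 / Real.exp (1 / 2) := by
      rw [ha2]
      have := mul_exp_le_exp_neg_half (u := |x| / s) (by positivity)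
      rw [Real.exp_neg] at this
      calc Real.exp (-(|x| / s) ^ 2 / 2) * (|x| / s)
          = (|x| / s) * Real.exp (-(|x| / s) ^ 2 / 2) := mul_comm _ _
        _ ≤ (Real.exp (1/2))⁻¹ := this
        _ = 1 / Real.exp (1/2) := (one_div _).symm
    have h2 : (s - sb) / sb ≤ (1 / 4) / (σsq - 1 / 4) := by
      rw [div_le_div_iff₀ hsb hD]
      have hstep : (s - sb) * sb ≤ 1 / 4 := by nlinarith
      nlinarith [mul_le_mul_of_nonneg_left (show σsq - 1/4 ≤ sb ^ 2 by nlinarith)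
        (sub_nonneg.2 hsbs), mul_le_mul_of_nonneg_right hstep hsb.le]
    calc c * Real.exp (-a ^ 2 / 2) * ((|x| / s) * ((s - sb) / sb))
        = c * (Real.exp (-a ^ 2 / 2) * (|x| / s)) * ((s - sb) / sb) := by ring
      _ ≤ c * (1 / Real.exp (1 / 2)) * ((s - sb) / sb) := by
          apply mul_le_mul_of_nonneg_right (mul_le_mul_of_nonneg_left h1 hc.le)
          have : 0 ≤ s - sb := sub_nonneg.2 hsbs
          positivity
      _ ≤ c * (1 / Real.exp (1 / 2)) * ((1 / 4) / (σsq - 1 / 4)) :=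
          mul_le_mul_of_nonneg_left h2 (by positivity)
      _ = (1 / (4 * Real.sqrt (2 * Real.pi))) * (1 / (Real.sqrt (Real.exp 1) * (σsq - 1 / 4))) := by
          rw [hE, hc_def]
          have h2pi : (0:ℝ) < Real.sqrt (2 * Real.pi) := Real.sqrt_pos.2 (by positivity)
          field_simp [hD.ne']
    done
  linarith
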